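/- Let (E,F) be a triangulation datum such that: E is nonempty; every e ∈ E occurs as an entry of some triple in F; the reflexive–transitive closure of the relation 'e and e′ occur as entries of a common triple of F' relates any two elements of E; and the zero colouring is the only element of Adm(E,F,3). Then |Adm(E,F,6)| ≤ 3^{|E|−1} + 1. -/

import Mathlib

/-- A colouring `θ : E → ℚ` is admissible for the triangulation datum `(E, F)`
and the integer `r` if every edge colour lies in `{0, 1/2, 1, …, (r-2)/2}` and
every triple of `F` satisfies the parity condition, the triangle inequalities,
and the upper bound constraint. -/
def IsAdmissible {E : Type*} (F : Multiset (E × E × E)) (r : ℕ) (θ : E → ℚ) : Prop :=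
  (∀ e : E, ∃ k : ℕ, k ≤ r - 2 ∧ θ e = (k : ℚ) / 2) ∧
  ∀ t ∈ F,
    (∃ z : ℤ, θ t.1 + θ t.2.1 + θ t.2.2 = (z : ℚ)) ∧
    θ t.1 ≤ θ t.2.1 + θ t.2.2 ∧
    θ t.2.1 ≤ θ t.1 + θ t.2.2 ∧
    θ t.2.2 ≤ θ t.1 + θ t.2.1 ∧
    θ t.1 + θ t.2.1 + θ t.2.2 ≤ (r : ℚ) - 2

/-- The set of admissible colourings of `(E, F)` for the integer `r`. -/
def Adm {E : Type*} (F : Multiset (E × E × E)) (r : ℕ) : Set (E → ℚ) :=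
  {θ | IsAdmissible F r θ}


lemma int_ne_half (w : ℤ) : (w : ℚ) ≠ 1/2 := by
  intro h
  have h2 : ((2*w : ℤ) : ℚ) = 1 := by push_cast; linarith
  have h3 : (2*w : ℤ) = 1 := by exact_mod_cast h2
  omega

lemma int_ne_threehalf (w : ℤ) : (w : ℚ) ≠ 3/2 := by
  intro h
  have h2 : ((2*w : ℤ) : ℚ) = 3 := by push_cast; linarith
  have h3 : (2*w : ℤ) = 3 := by exact_mod_cast h2
  omega

lemma half_triple (x y z : ℚ) (hx : x = 0 ∨ x = 1/2) (hy : y = 0 ∨ y = 1/2)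
    (hz : z = 0 ∨ z = 1/2) (w : ℤ) (hw : x + y + z = (w:ℚ)) :
    x ≤ y + z ∧ y ≤ x + z ∧ z ≤ x + y ∧ x + y + z ≤ ((3:ℕ):ℚ) - 2 := by
  rcases hx with rfl|rfl <;> rcases hy with rfl|rfl <;> rcases hz with rfl|rfl <;>
    norm_num at hw ⊢ <;>
    first
      | exact absurd hw.symm (int_ne_half w)
      | exact absurd hw.symm (int_ne_threehalf w)
      | exact absurd hw (int_ne_half w)
      | exact absurd hw (int_ne_threehalf w)

lemma values_in_012 {E : Type*} (F : Multiset (E × E × E))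
    (h3 : Adm F 3 = {(0 : E → ℚ)}) {θ : E → ℚ} (hθ : θ ∈ Adm F 6) (e : E) :
    θ e = 0 ∨ θ e = 1 ∨ θ e = 2 := by
  classical
  obtain ⟨hcol, htri⟩ := hθ
  set η : E → ℚ := fun e => if ∃ z : ℤ, θ e = (z:ℚ) then 0 else 1/2 with hηdef
  have hηval : ∀ e, η e = 0 ∨ η e = 1/2 := by
    intro e; rw [hηdef]; simp only; split_ifs <;> simp
  have hdec : ∀ e, ∃ z : ℤ, θ e = (z:ℚ) + η e := by
    intro e
    by_cases h : ∃ z : ℤ, θ e = (z:ℚ)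
    · obtain ⟨z, hz⟩ := h
      refine ⟨z, ?_⟩
      rw [hηdef]; simp only
      rw [if_pos ⟨z, hz⟩, add_zero]; exact hz
    · obtain ⟨k, hk4, hke⟩ := hcol e
      have hodd : ∃ j : ℕ, k = 2*j + 1 := by
        rcases Nat.even_or_odd k with he | ho
        · exfalso; apply h
          obtain ⟨j, hj⟩ := he
          exact ⟨j, by rw [hke, hj]; push_cast; ring⟩
        · obtain ⟨j, hj⟩ := ho; exact ⟨j, hj⟩
      obtain ⟨j, hj⟩ := hodd
      refine ⟨(j:ℤ), ?_⟩
      rw [hηdef]; simp only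
      rw [if_neg h, hke, hj]; push_cast; ring
  have hη3 : η ∈ Adm F 3 := by
    refine ⟨?_, ?_⟩
    · intro e
      rcases hηval e with h | h
      · exact ⟨0, by norm_num, by rw [h]; norm_num⟩
      · exact ⟨1, by norm_num, by rw [h]; norm_num⟩
    · intro t ht
      obtain ⟨⟨z, hz⟩, _, _, _, _⟩ := htri t ht
      obtain ⟨z1, hz1⟩ := hdec t.1
      obtain ⟨z2, hz2⟩ := hdec t.2.1
      obtain ⟨z3, hz3⟩ := hdec t.2.2
      have hw : η t.1 + η t.2.1 + η t.2.2 = ((z - z1 - z2 - z3 : ℤ) : ℚ) := by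
        push_cast; linarith
      obtain ⟨a, b, c, d⟩ := half_triple _ _ _ (hηval t.1) (hηval t.2.1) (hηval t.2.2)
        _ hw
      exact ⟨⟨z - z1 - z2 - z3, hw⟩, a, b, c, d⟩
  have hη0 : η = 0 := by rw [h3] at hη3; exact hη3
  have hint : ∃ z : ℤ, θ e = (z:ℚ) := by
    obtain ⟨z, hz⟩ := hdec e
    rw [hη0] at hz; simp at hz; exact ⟨z, hz⟩
  obtain ⟨z, hz⟩ := hint
  obtain ⟨k, hk4, hke⟩ := hcol e
  have h2z : (2*z : ℤ) = (k : ℤ) := by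
    have : ((2*z : ℤ) : ℚ) = ((k:ℤ) : ℚ) := by push_cast; rw [hz] at hke; linarith
    exact_mod_cast this
  have hk4' : (k : ℤ) ≤ 4 := by exact_mod_cast hk4
  have : z = 0 ∨ z = 1 ∨ z = 2 := by omega
  rcases this with rfl | rfl | rfl
  · left; rw [hz]; norm_num
  · right; left; rw [hz]; norm_num
  · right; right; rw [hz]; norm_num

lemma triple_case (a b c a' b' c' : ℚ)
    (h1 : (a = 0 ∧ a' = 1) ∨ (a = 1 ∧ a' = 2) ∨ (a = 2 ∧ a' = 0))
    (h2 : (b = 0 ∧ b' = 1) ∨ (b = 1 ∧ b' = 2) ∨ (b = 2 ∧ b' = 0))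
    (h3 : (c = 0 ∧ c' = 1) ∨ (c = 1 ∧ c' = 2) ∨ (c = 2 ∧ c' = 0))
    (t1 : a ≤ b + c) (t2 : b ≤ a + c) (t3 : c ≤ a + b) (t4 : a + b + c ≤ 4)
    (t1' : a' ≤ b' + c') (t2' : b' ≤ a' + c') (t3' : c' ≤ a' + b')
    (t4' : a' + b' + c' ≤ 4) :
    (a = 0 ∧ b = 0 ∧ c = 0) ∨ (a = 1 ∧ b = 1 ∧ c = 2) ∨
    (a = 1 ∧ b = 2 ∧ c = 1) ∨ (a = 2 ∧ b = 1 ∧ c = 1) := by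
  rcases h1 with ⟨rfl, rfl⟩ | ⟨rfl, rfl⟩ | ⟨rfl, rfl⟩ <;>
  rcases h2 with ⟨rfl, rfl⟩ | ⟨rfl, rfl⟩ | ⟨rfl, rfl⟩ <;>
  rcases h3 with ⟨rfl, rfl⟩ | ⟨rfl, rfl⟩ | ⟨rfl, rfl⟩ <;>
  norm_num at *

lemma triple_case2 (a b c : ℚ)
    (h1 : a = 0 ∨ a = 2) (h2 : b = 0 ∨ b = 2) (h3 : c = 0 ∨ c = 2)
    (t1 : a ≤ b + c) (t2 : b ≤ a + c) (t3 : c ≤ a + b) (t4 : a + b + c ≤ 4) :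
    (a = 0 ∧ b = 0 ∧ c = 0) ∨ (a = 0 ∧ b = 2 ∧ c = 2) ∨
    (a = 2 ∧ b = 0 ∧ c = 2) ∨ (a = 2 ∧ b = 2 ∧ c = 0) := by
  rcases h1 with rfl | rfl <;> rcases h2 with rfl | rfl <;> rcases h3 with rfl | rfl <;>
  norm_num at *

lemma adm3_triple (x y z : ℚ) (hx : x = 0 ∨ x = 1/2) (hy : y = 0 ∨ y = 1/2)
    (hz : z = 0 ∨ z = 1/2) (hsum : x + y + z = 0 ∨ x + y + z = 1) :
    (∃ w : ℤ, x + y + z = (w:ℚ)) ∧ x ≤ y + z ∧ y ≤ x + z ∧ z ≤ x + y ∧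
      x + y + z ≤ ((3:ℕ):ℚ) - 2 := by
  rcases hx with rfl|rfl <;> rcases hy with rfl|rfl <;> rcases hz with rfl|rfl <;>
    rcases hsum with h | h <;> (try norm_num at h) <;> (try norm_num) <;>
    first
      | (refine ⟨0, ?_⟩; norm_num; done)
      | (refine ⟨1, ?_⟩; norm_num; done)

lemma shift_zero {E : Type*} (F : Multiset (E × E × E))
    (h3 : Adm F 3 = {(0 : E → ℚ)}) {θ θ' : E → ℚ}
    (hθ : θ ∈ Adm F 6) (hθ' : θ' ∈ Adm F 6)
    (hs : ∀ e, (θ e = 0 ∧ θ' e = 1) ∨ (θ e = 1 ∧ θ' e = 2) ∨ (θ e = 2 ∧ θ' e = 0)) :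
    θ = 0 := by
  classical
  have h6 : ((6:ℕ):ℚ) - 2 = 4 := by norm_num
  -- every triple of θ has values (0,0,0) or a permutation of (1,1,2)
  have key : ∀ t ∈ F,
      (θ t.1 = 0 ∧ θ t.2.1 = 0 ∧ θ t.2.2 = 0) ∨
      (θ t.1 = 1 ∧ θ t.2.1 = 1 ∧ θ t.2.2 = 2) ∨
      (θ t.1 = 1 ∧ θ t.2.1 = 2 ∧ θ t.2.2 = 1) ∨
      (θ t.1 = 2 ∧ θ t.2.1 = 1 ∧ θ t.2.2 = 1) := by
    intro t ht
    obtain ⟨_, a1, a2, a3, a4⟩ := hθ.2 t ht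
    obtain ⟨_, b1, b2, b3, b4⟩ := hθ'.2 t ht
    rw [h6] at a4 b4
    exact triple_case _ _ _ _ _ _ (hs t.1) (hs t.2.1) (hs t.2.2) a1 a2 a3 a4 b1 b2 b3 b4
  -- the indicator of colour 1 is 3-admissible, hence zero
  have hno1 : ∀ e, θ e ≠ 1 := by
    set η : E → ℚ := fun e => if θ e = 1 then 1/2 else 0 with hηdef
    have hηval : ∀ e, η e = 0 ∨ η e = 1/2 := by
      intro e; rw [hηdef]; simp only; split_ifs <;> norm_num
    have hη3 : η ∈ Adm F 3 := by
      refine ⟨?_, ?_⟩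
      · intro e
        rcases hηval e with h | h
        · exact ⟨0, by norm_num, by rw [h]; norm_num⟩
        · exact ⟨1, by norm_num, by rw [h]; norm_num⟩
      · intro t ht
        have hsum : η t.1 + η t.2.1 + η t.2.2 = 0 ∨ η t.1 + η t.2.1 + η t.2.2 = 1 := by
          rcases key t ht with ⟨e1, e2, e3⟩ | ⟨e1, e2, e3⟩ | ⟨e1, e2, e3⟩ | ⟨e1, e2, e3⟩ <;>
            rw [hηdef] <;> simp only <;> rw [e1, e2, e3] <;> norm_num
        exact adm3_triple _ _ _ (hηval t.1) (hηval t.2.1) (hηval t.2.2) hsum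
    rw [h3] at hη3
    intro e he
    have h0 : η e = 0 := by rw [hη3]; rfl
    rw [hηdef] at h0; simp only at h0
    rw [if_pos he] at h0; norm_num at h0
  -- values now in {0,2}; the indicator of colour 2 is 3-admissible, hence zero
  have hval2 : ∀ e, θ e = 0 ∨ θ e = 2 := by
    intro e
    rcases hs e with ⟨h, _⟩ | ⟨h, _⟩ | ⟨h, _⟩
    · exact Or.inl h
    · exact absurd h (hno1 e)
    · exact Or.inr h
  have hno2 : ∀ e, θ e ≠ 2 := by
    set η : E → ℚ := fun e => if θ e = 2 then 1/2 else 0 with hηdef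
    have hηval : ∀ e, η e = 0 ∨ η e = 1/2 := by
      intro e; rw [hηdef]; simp only; split_ifs <;> norm_num
    have hη3 : η ∈ Adm F 3 := by
      refine ⟨?_, ?_⟩
      · intro e
        rcases hηval e with h | h
        · exact ⟨0, by norm_num, by rw [h]; norm_num⟩
        · exact ⟨1, by norm_num, by rw [h]; norm_num⟩
      · intro t ht
        obtain ⟨_, a1, a2, a3, a4⟩ := hθ.2 t ht
        rw [h6] at a4
        have hsum : η t.1 + η t.2.1 + η t.2.2 = 0 ∨ η t.1 + η t.2.1 + η t.2.2 = 1 := by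
          rcases triple_case2 _ _ _ (hval2 t.1) (hval2 t.2.1) (hval2 t.2.2) a1 a2 a3 a4 with
            ⟨e1, e2, e3⟩ | ⟨e1, e2, e3⟩ | ⟨e1, e2, e3⟩ | ⟨e1, e2, e3⟩ <;>
            rw [hηdef] <;> simp only <;> rw [e1, e2, e3] <;> norm_num
        exact adm3_triple _ _ _ (hηval t.1) (hηval t.2.1) (hηval t.2.2) hsum
    rw [h3] at hη3
    intro e he
    have h0 : η e = 0 := by rw [hη3]; rfl
    rw [hηdef] at h0; simp only at h0
    rw [if_pos he] at h0; norm_num at h0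
  funext e
  rcases hval2 e with h | h
  · exact h
  · exact absurd h (hno2 e)

/-- Recode a colour value in `{0,1,2} ⊆ ℚ` as an element of `ZMod 3`. -/
def wval (a : ℚ) : ZMod 3 := if a = 0 then 0 else if a = 1 then 1 else 2

lemma wval_inj (a b : ℚ) (ha : a = 0 ∨ a = 1 ∨ a = 2) (hb : b = 0 ∨ b = 1 ∨ b = 2)
    (h : wval a = wval b) : a = b := by
  rcases ha with rfl|rfl|rfl <;> rcases hb with rfl|rfl|rfl <;>
    simp only [wval] at h <;> (try norm_num at h) <;> (try norm_num) <;>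
    first
      | rfl
      | exact absurd h (by decide)

lemma wval_shift (a b : ℚ) (ha : a = 0 ∨ a = 1 ∨ a = 2) (hb : b = 0 ∨ b = 1 ∨ b = 2)
    (h : wval a = wval b + 1) :
    (b = 0 ∧ a = 1) ∨ (b = 1 ∧ a = 2) ∨ (b = 2 ∧ a = 0) := by
  rcases ha with rfl|rfl|rfl <;> rcases hb with rfl|rfl|rfl <;>
    simp only [wval] at h <;> (try norm_num at h) <;> (try norm_num) <;>
    first
      | exact absurd h (by decide)
      | (exfalso; revert h; decide)


/-- For a triangulation datum with nonempty edge set in which every edge occurs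
in some triple, the triples connect the edge set, and the zero colouring is the
only element of `Adm(E,F,3)`, the stated bound on `|Adm(E,F,6)|` holds. -/
theorem adm_six_card_le {E : Type*} [Fintype E] [Nonempty E]
    (F : Multiset (E × E × E))
    (hcover : ∀ e : E, ∃ t ∈ F, e = t.1 ∨ e = t.2.1 ∨ e = t.2.2)
    (hconn : ∀ e e' : E,
      Relation.ReflTransGen
        (fun x y : E => ∃ t ∈ F,
          (x = t.1 ∨ x = t.2.1 ∨ x = t.2.2) ∧ (y = t.1 ∨ y = t.2.1 ∨ y = t.2.2))
        e e')
    (h3 : Adm F 3 = {(0 : E → ℚ)}) :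
    (Adm F 6).ncard ≤ 3 ^ (Fintype.card E - 1) + 1 := by
  classical
  have hval : ∀ θ ∈ Adm F 6, ∀ e : E, θ e = 0 ∨ θ e = 1 ∨ θ e = 2 :=
    fun θ hθ e => values_in_012 F h3 hθ e
  set S' : Set (E → ℚ) := Adm F 6 \ {0} with hS'
  have hSsub : S' ⊆ Adm F 6 := Set.diff_subset
  -- injectivity of the recoding on admissible colourings
  have winj : ∀ θ ∈ Adm F 6, ∀ θ' ∈ Adm F 6,
      (∀ e, wval (θ e) = wval (θ' e)) → θ = θ' := by
    intro θ hθ θ' hθ' h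
    funext e
    exact wval_inj _ _ (hval θ hθ e) (hval θ' hθ' e) (h e)
  -- shift rigidity
  have wsh : ∀ θ ∈ Adm F 6, ∀ θ' ∈ Adm F 6,
      (∀ e, wval (θ e) = wval (θ' e) + 1) → θ' = 0 := by
    intro θ hθ θ' hθ' h
    refine shift_zero F h3 hθ' hθ ?_
    intro e
    exact wval_shift _ _ (hval θ hθ e) (hval θ' hθ' e) (h e)
  -- S' is finite
  have hinjOn : Set.InjOn (fun θ : E → ℚ => fun e => wval (θ e)) S' := by
    intro θ hθ θ' hθ' h
    exact winj θ (hSsub hθ) θ' (hSsub hθ') (fun e => congrFun h e)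
  have hSfin : S'.Finite :=
    Set.Finite.of_finite_image (Set.toFinite _) hinjOn
  haveI : Fintype ↥S' := hSfin.fintype
  -- the key injection
  let f : ↥S' × ZMod 3 → (E → ZMod 3) := fun p e => wval (p.1.1 e) + p.2
  have hf : Function.Injective f := by
    rintro ⟨⟨θ, hθ⟩, c⟩ ⟨⟨θ', hθ'⟩, c'⟩ h
    have hee : ∀ e, wval (θ e) + c = wval (θ' e) + c' := fun e => congrFun h e
    have hθA : θ ∈ Adm F 6 := hSsub hθ
    have hθ'A : θ' ∈ Adm F 6 := hSsub hθ'
    have hd : c' - c = 0 ∨ c' - c = 1 ∨ c' - c = 2 := by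
      have : ∀ d : ZMod 3, d = 0 ∨ d = 1 ∨ d = 2 := by decide
      exact this _
    rcases hd with hd | hd | hd
    · have hc : c' = c := sub_eq_zero.mp hd
      have hθθ : θ = θ' := by
        refine winj θ hθA θ' hθ'A (fun e => ?_)
        have h0 := hee e
        rw [hc] at h0
        exact add_right_cancel h0
      simp [Prod.ext_iff, Subtype.ext_iff, hθθ, hc]
    · exfalso
      have hc : c' = 1 + c := sub_eq_iff_eq_add.mp hd
      have hsh : ∀ e, wval (θ e) = wval (θ' e) + 1 := by
        intro e
        have h0 := hee e
        rw [hc] at h0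
        have h1 : wval (θ' e) + (1 + c) = (wval (θ' e) + 1) + c := by ring
        rw [h1] at h0
        exact add_right_cancel h0
      have hz : θ' = 0 := wsh θ hθA θ' hθ'A hsh
      exact hθ'.2 hz
    · exfalso
      have hd' : c - c' = 1 := by
        have hneg : c - c' = -(c' - c) := by ring
        rw [hneg, hd]; decide
      have hc : c = 1 + c' := sub_eq_iff_eq_add.mp hd'
      have hsh : ∀ e, wval (θ' e) = wval (θ e) + 1 := by
        intro e
        have h0 := (hee e).symm
        rw [hc] at h0
        have h1 : wval (θ e) + (1 + c') = (wval (θ e) + 1) + c' := by ring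
        rw [h1] at h0
        exact add_right_cancel h0
      have hz : θ = 0 := wsh θ' hθ'A θ hθA hsh
      exact hθ.2 hz
  
  have hcard : Fintype.card (↥S' × ZMod 3) ≤ Fintype.card (E → ZMod 3) :=
    Fintype.card_le_of_injective f hf
  rw [Fintype.card_prod] at hcard
  have hz3 : Fintype.card (ZMod 3) = 3 := ZMod.card 3
  rw [hz3] at hcard
  have hfn : Fintype.card (E → ZMod 3) = 3 ^ Fintype.card E := by
    rw [Fintype.card_fun, ZMod.card]
  rw [hfn] at hcard
  have hm : 1 ≤ Fintype.card E := Fintype.card_pos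
  have hpow : 3 ^ Fintype.card E = 3 ^ (Fintype.card E - 1) * 3 := by
    conv_lhs => rw [← Nat.succ_pred_eq_of_pos hm]
    rw [pow_succ, Nat.pred_eq_sub_one]
  rw [hpow] at hcard
  have hS'card : S'.ncard ≤ 3 ^ (Fintype.card E - 1) := by
    refine Nat.le_of_mul_le_mul_right ?_ (by norm_num : 0 < 3)
    have hc : S'.ncard = Fintype.card ↥S' := by
      rw [← Nat.card_coe_set_eq, Nat.card_eq_fintype_card]
    rw [hc]
    exact hcard
  have hsub : Adm F 6 ⊆ insert (0 : E → ℚ) S' := by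
    intro θ hθ
    by_cases h : θ = 0
    · rw [h]; exact Set.mem_insert _ _
    · exact Set.mem_insert_of_mem _ ⟨hθ, h⟩
  calc (Adm F 6).ncard ≤ (insert (0 : E → ℚ) S').ncard :=
        Set.ncard_le_ncard hsub (hSfin.insert 0)
    _ ≤ S'.ncard + 1 := Set.ncard_insert_le _ _
    _ ≤ 3 ^ (Fintype.card E - 1) + 1 := by omega
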